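/- Let Y ⊆ ℝ^k be a set contained in the positive orthant and let y* be a Pareto-optimal point of Y (no z ∈ Y satisfies z ≥ y* componentwise with strict inequality in some coordinate). Then there exists a weight vector λ > 0 (componentwise) such that y* maximizes the hypervolume scalarization s_λ(y) = min_i (y_i/λ_i)^k over y ∈ Y. In particular, one may take λ = y*/‖y*‖. -/

import Mathlib

/-- The hypervolume scalarization `s_λ(y) = min_i (y_i / λ_i)^k`. -/
noncomputable def sHV (k : ℕ) (lam y : Fin k → ℝ) : ℝ := ⨅ i, (y i / lam i) ^ k

/-- A point is Pareto-dominated by `z` if `z ≥ y` componentwise with some strict coordinate. -/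
def Dominates {k : ℕ} (z y : Fin k → ℝ) : Prop := (∀ i, y i ≤ z i) ∧ ∃ j, y j < z j

theorem stmt_0 {k : ℕ} (hk : 0 < k) (Y : Set (Fin k → ℝ))
    (hpos : ∀ y ∈ Y, ∀ i, 0 < y i)
    (ystar : Fin k → ℝ) (hmem : ystar ∈ Y)
    (hpareto : ¬ ∃ z ∈ Y, Dominates z ystar) :
    ∃ lam : Fin k → ℝ, (∀ i, 0 < lam i) ∧
      (∀ y ∈ Y, sHV k lam y ≤ sHV k lam ystar) ∧
      lam = fun i => ystar i / Real.sqrt (∑ j, (ystar j) ^ 2) := by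
  haveI : Nonempty (Fin k) := ⟨⟨0, hk⟩⟩
  set N : ℝ := Real.sqrt (∑ j, (ystar j) ^ 2) with hNdef
  have hys : ∀ i, 0 < ystar i := hpos ystar hmem
  have hN : 0 < N := by
    apply Real.sqrt_pos.mpr
    apply Finset.sum_pos
    · intro i _
      exact pow_pos (hys i) 2
    · exact ⟨Classical.arbitrary (Fin k), Finset.mem_univ _⟩
  set lam : Fin k → ℝ := fun i => ystar i / N with hlam
  have hlpos : ∀ i, 0 < lam i := fun i => div_pos (hys i) hN
  have hratio : ∀ i, ystar i / lam i = N := by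
    intro i
    rw [hlam]
    field_simp
    rw [div_self (hys i).ne']
  have hstar : sHV k lam ystar = N ^ k := by
    unfold sHV
    simp only [hratio]
    exact ciInf_const
  refine ⟨lam, hlpos, ?_, rfl⟩
  intro y hy
  have hypos := hpos y hy
  -- get index i0 with y i0 ≤ ystar i0
  have hi0 : ∃ i0, y i0 ≤ ystar i0 := by
    by_cases h : ∀ i, ystar i ≤ y i
    · by_contra hc
      push_neg at hc
      exact hpareto ⟨y, hy, h, Classical.arbitrary (Fin k), hc _⟩
    · push_neg at h
      obtain ⟨i, hi⟩ := h
      exact ⟨i, hi.le⟩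
  obtain ⟨i0, hi0⟩ := hi0
  rw [hstar]
  unfold sHV
  have hb : BddBelow (Set.range fun i => (y i / lam i) ^ k) :=
    (Set.finite_range _).bddBelow
  refine le_trans (ciInf_le hb i0) ?_
  have h1 : y i0 / lam i0 ≤ N := by
    rw [← hratio i0]
    exact div_le_div_of_nonneg_right hi0 (hlpos i0).le |>.trans_eq rfl
  calc (y i0 / lam i0) ^ k ≤ N ^ k :=
        pow_le_pow_left₀ (le_of_lt (div_pos (hypos i0) (hlpos i0))) h1 k
    _ = N ^ k := rfl
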